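/- Let g₁, g₂ be bijective isometries of H² and let z₁, z₂ ∈ H² be such that for i = 1, 2 the displacement d(zᵢ, gᵢ(zᵢ)) is positive and equals the infimum over all w ∈ H² of d(w, gᵢ(w)) (i.e., each gᵢ is hyperbolic and zᵢ lies on its invariant axis). Let γ be the isometry of the bidisk given by γ(x₁,x₂) = (g₁(x₁), g₂(x₂)) and set 𝐳 = (z₁,z₂). Then the equidistant hypersurfaces E(𝐳, γ(𝐳)) and E(𝐳, γ⁻¹(𝐳)) are disjoint: no point 𝐱 of the bidisk satisfies both ρ(𝐱,𝐳) = ρ(𝐱,γ(𝐳)) and ρ(𝐱,𝐳) = ρ(𝐱,γ⁻¹(𝐳)). -/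

import Mathlib

open UpperHalfPlane

noncomputable section

/-- The bidisk `ℍ × ℍ` with the `ℓ²` product metric. -/
abbrev Bidisk : Type := WithLp 2 (UpperHalfPlane × UpperHalfPlane)

/-- Package a pair of points of `ℍ` as a point of the bidisk. -/
def toBD (p : UpperHalfPlane × UpperHalfPlane) : Bidisk := (WithLp.equiv 2 _).symm p

open Real


private lemma mono_of_deriv {a : ℝ} {f f' : ℝ → ℝ} (hf : ∀ t, HasDerivAt f (f' t) t)
    (hf' : ∀ t, a ≤ t → 0 ≤ f' t) {x y : ℝ} (hx : a ≤ x) (hxy : x ≤ y) : f x ≤ f y := by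
  have : MonotoneOn f (Set.Ici a) := by
    refine monotoneOn_of_deriv_nonneg (convex_Ici a) ?_ ?_ ?_
    · exact fun t _ => (hf t).continuousAt.continuousWithinAt
    · exact fun t ht => ((hf t).differentiableAt).differentiableWithinAt
    · intro t ht
      rw [(hf t).deriv]
      exact hf' t (le_of_lt (by simpa using ht))
  exact this hx (hx.trans hxy) hxy

private lemma cosh_mono {x y : ℝ} (hx : 0 ≤ x) (hxy : x ≤ y) : cosh x ≤ cosh y := by
  rw [Real.cosh_le_cosh, abs_of_nonneg hx, abs_of_nonneg (hx.trans hxy)]; exact hxy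

private lemma L00 {x : ℝ} (hx : 0 ≤ x) : sinh x ≤ x * cosh x := by
  have h := mono_of_deriv (a := 0) (f := fun t => t * cosh t - sinh t) (f' := fun t => t * sinh t)
    (fun t => by
      exact (((hasDerivAt_id t).mul (Real.hasDerivAt_cosh t)).sub (Real.hasDerivAt_sinh t)).congr_deriv
        (by simp <;> ring))
    (fun t ht => mul_nonneg ht (by simpa [Real.sinh_nonneg_iff] using ht))
    (le_refl (0:ℝ)) hx
  simp at h
  linarith

private lemma L0 {x y : ℝ} (hx : 0 ≤ x) (hxy : x ≤ y) : y * sinh x ≤ x * sinh y := by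
  have h := mono_of_deriv (a := x) (f := fun t => x * sinh t - t * sinh x)
    (f' := fun t => x * cosh t - sinh x)
    (fun t => by
      exact (((Real.hasDerivAt_sinh t).const_mul x).sub ((hasDerivAt_id t).mul_const (sinh x))).congr_deriv
        (by simp <;> ring))
    (fun t ht => by
      have h1 : sinh x ≤ x * cosh x := L00 hx
      have h2 : cosh x ≤ cosh t := cosh_mono hx ht
      nlinarith [mul_le_mul_of_nonneg_left h2 hx])
    (le_refl x) hxy
  nlinarith

private lemma K1 {x y : ℝ} (hx : 0 ≤ x) (hxy : x ≤ y) :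
    sinh x * (y^2 - x^2) ≤ 2*x*(cosh y - cosh x) := by
  have h := mono_of_deriv (a := x) (f := fun t => 2*x*cosh t - sinh x * t^2)
    (f' := fun t => 2*x*sinh t - sinh x * (2*t))
    (fun t => by
      have := ((Real.hasDerivAt_cosh t).const_mul (2*x)).sub
        (((hasDerivAt_pow 2 t)).const_mul (sinh x))
      exact this.congr_deriv (by simp <;> ring))
    (fun t ht => by
      have := L0 hx ht
      have hs : 0 ≤ sinh x := by simpa [Real.sinh_nonneg_iff] using hx
      nlinarith)
    (le_refl x) hxy
  nlinarith

private lemma mono_of_deriv' {a b : ℝ} {f f' : ℝ → ℝ} (hf : ∀ t, HasDerivAt f (f' t) t)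
    (hf' : ∀ t, a ≤ t → t ≤ b → 0 ≤ f' t) {x y : ℝ} (hx : a ≤ x) (hxy : x ≤ y) (hy : y ≤ b) :
    f x ≤ f y := by
  have : MonotoneOn f (Set.Icc a b) := by
    refine monotoneOn_of_deriv_nonneg (convex_Icc a b) ?_ ?_ ?_
    · exact fun t _ => (hf t).continuousAt.continuousWithinAt
    · exact fun t ht => ((hf t).differentiableAt).differentiableWithinAt
    · intro t ht
      rw [interior_Icc] at ht
      rw [(hf t).deriv]
      exact hf' t ht.1.le ht.2.le
  exact this ⟨hx, hxy.trans hy⟩ ⟨hx.trans hxy, hy⟩ hxy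

private lemma K2 {x y : ℝ} (hx : 0 ≤ x) (hxy : x ≤ y) :
    2*y*(cosh y - cosh x) ≤ sinh y * (y^2 - x^2) := by
  -- f(t) = 2*y*cosh t - sinh y * t^2 is antitone on [0, y]; f(x) ≥ f(y)
  have h := mono_of_deriv' (a := 0) (b := y) (f := fun t => sinh y * t^2 - 2*y*cosh t)
    (f' := fun t => sinh y * (2*t) - 2*y*sinh t)
    (fun t => by
      have := (((hasDerivAt_pow 2 t)).const_mul (sinh y)).sub
        ((Real.hasDerivAt_cosh t).const_mul (2*y))
      exact this.congr_deriv (by simp <;> ring))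
    (fun t ht hty => by
      have := L0 ht hty
      nlinarith)
    hx hxy (le_refl y)
  nlinarith



private lemma cosh_mono' {x y : ℝ} (hx : 0 ≤ x) (hy : 0 ≤ y) (h : cosh x ≤ cosh y) : x ≤ y := by
  have := (Real.cosh_le_cosh (x := x) (y := y)).mp h
  rwa [abs_of_nonneg hx, abs_of_nonneg hy] at this

private lemma starAux {A B C l : ℝ} (hA : 0 ≤ A) (hB : 0 ≤ B) (hC : 0 ≤ C) (hl : 0 < l)
    (hBA : B ≤ A)
    (hi : cosh A + cosh B = 2 * (cosh l * cosh C))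
    (hii : cosh A - cosh B ≤ 2 * (sinh l * sinh C)) :
    2*C^2 + 2*l^2 ≤ A^2 + B^2 := by
  set σ := l + C with hσdef
  set δ := |l - C| with hδdef
  have hσ0 : 0 ≤ σ := by positivity
  have hδ0 : 0 ≤ δ := abs_nonneg _
  have hsum : cosh σ + cosh δ = cosh A + cosh B := by
    rw [hσdef, hδdef, Real.cosh_abs, Real.cosh_add, Real.cosh_sub, hi]; ring
  have hcoshA : cosh A ≤ cosh σ := by
    rw [hσdef, Real.cosh_add]; linarith
  have hcoshB : cosh δ ≤ cosh B := by
    rw [hδdef, Real.cosh_abs, Real.cosh_sub]; linarith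
  have hAσ : A ≤ σ := cosh_mono' hA hσ0 hcoshA
  have hδB : δ ≤ B := cosh_mono' hδ0 hB hcoshB
  have hgoal : σ^2 + δ^2 ≤ A^2 + B^2 := by
    rcases eq_or_lt_of_le hB with hB0 | hB0
    · -- B = 0
      have hδ00 : δ = 0 := le_antisymm (by rw [← hB0] at hδB; exact hδB) hδ0
      have hAeq : A = σ := by
        refine le_antisymm hAσ (cosh_mono' hσ0 hA ?_)
        have h1 : cosh B = cosh δ := by rw [← hB0, hδ00]
        linarith
      rw [hAeq, hδ00, ← hB0]
    · -- 0 < B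
      have hA0 : 0 < A := lt_of_lt_of_le hB0 hBA
      have hΔ : cosh σ - cosh A = cosh B - cosh δ := by linarith
      have hK1 := K1 hA0.le hAσ
      have hK2 := K2 hδ0 hδB
      have hL0 := L0 hB0.le hBA
      have hsA : 0 < sinh A := by rwa [Real.sinh_pos_iff]
      have hsB : 0 < sinh B := by rwa [Real.sinh_pos_iff]
      have hΔ0 : 0 ≤ cosh σ - cosh A := by linarith
      -- (σ²−A²) sinhA sinhB ≤ 2AΔ sinhB ≤ 2BΔ sinhA ≤ (B²−δ²) sinhA sinhB
      have s1 : sinh A * (σ^2 - A^2) * sinh B ≤ 2*A*(cosh σ - cosh A) * sinh B :=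
        mul_le_mul_of_nonneg_right hK1 hsB.le
      have s2 : 2*A*(cosh σ - cosh A) * sinh B ≤ 2*B*(cosh σ - cosh A) * sinh A := by
        nlinarith [mul_le_mul_of_nonneg_left hL0 (by linarith : (0:ℝ) ≤ 2*(cosh σ - cosh A))]
      have s3 : 2*B*(cosh B - cosh δ) * sinh A ≤ sinh B * (B^2 - δ^2) * sinh A :=
        mul_le_mul_of_nonneg_right hK2 hsA.le
      have : sinh A * (σ^2 - A^2) * sinh B ≤ sinh B * (B^2 - δ^2) * sinh A := by
        rw [← hΔ] at s3; linarith
      have h4 : (σ^2 - A^2) * (sinh A * sinh B) ≤ (B^2 - δ^2) * (sinh A * sinh B) := by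
        linear_combination this
      have h5 := (mul_le_mul_iff_of_pos_right (mul_pos hsA hsB)).mp h4
      linarith
  have hδsq : δ^2 = (l - C)^2 := sq_abs _
  nlinarith [hgoal, hδsq]

lemma starIneq {A B C l : ℝ} (hA : 0 ≤ A) (hB : 0 ≤ B) (hC : 0 ≤ C) (hl : 0 < l)
    (hi : cosh A + cosh B = 2 * (cosh l * cosh C))
    (hii : |cosh A - cosh B| ≤ 2 * (sinh l * sinh C)) :
    2*C^2 + 2*l^2 ≤ A^2 + B^2 := by
  rcases le_total B A with h | h
  · exact starAux hA hB hC hl h hi (le_trans (le_abs_self _) hii)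
  · have := starAux hB hA hC hl h (by linarith)
      (by rw [abs_sub_comm] at hii; exact le_trans (le_abs_self _) hii)
    linarith



/-- Minkowski form on ℝ³. -/
def mink (a b : ℝ × ℝ × ℝ) : ℝ := -(a.1*b.1) + a.2.1*b.2.1 + a.2.2*b.2.2

/-- Hyperboloid embedding of ℍ. -/
def Phi (z : ℍ) : ℝ × ℝ × ℝ :=
  ((z.re^2 + z.im^2 + 1)/(2*z.im), ((z.re^2 + z.im^2 - 1)/(2*z.im), z.re/z.im))

lemma cosh_dist_mink (z w : ℍ) : Real.cosh (dist z w) = - mink (Phi z) (Phi w) := by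
  rw [UpperHalfPlane.cosh_dist, Complex.dist_eq, Complex.sq_norm, Complex.normSq_apply]
  simp only [Complex.sub_re, Complex.sub_im, coe_re, coe_im, mink, Phi]
  have hz : z.im ≠ 0 := z.im_pos.ne'
  have hw : w.im ≠ 0 := w.im_pos.ne'
  field_simp
  ring

lemma mink_self_phi (z : ℍ) : mink (Phi z) (Phi z) = -1 := by
  have := cosh_dist_mink z z
  simp at this
  linarith

lemma phi_fst_sub (z : ℍ) : (Phi z).1 - (Phi z).2.1 = 1/z.im := by
  have hz : z.im ≠ 0 := z.im_pos.ne'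
  simp only [Phi]
  rw [div_sub_div_same]
  rw [show z.re^2 + z.im^2 + 1 - (z.re^2 + z.im^2 - 1) = 2 by ring]
  rw [div_eq_div_iff (by positivity) hz]
  ring

private lemma lagrange_key {m0 m1 m2 n0 n1 n2 : ℝ}
    (hm : -(m0 * m0) + m1 * m1 + m2 * m2 = -1)
    (hn : -(n0 * m0) + n1 * m1 + n2 * m2 = 0) :
    (n1*n1 + n2*n2 - n0*n0) * (m1*m1 + m2*m2) = n0*n0 + (n1*m2 - n2*m1)^2 := by
  have he : n0*m0 = n1*m1 + n2*m2 := by linarith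
  have hm' : m0*m0 = 1 + m1*m1 + m2*m2 := by linarith
  linear_combination (-(n0*m0 + n1*m1 + n2*m2)) * he + n0*n0 * hm'

lemma mink_semidef {m n : ℝ × ℝ × ℝ} (hm : mink m m = -1) (hn : mink n m = 0) :
    0 ≤ mink n n := by
  obtain ⟨m0, m1, m2⟩ := m
  obtain ⟨n0, n1, n2⟩ := n
  simp only [mink] at *
  have key := lagrange_key hm hn
  rcases eq_or_lt_of_le (by nlinarith [sq_nonneg m1, sq_nonneg m2] : (0:ℝ) ≤ m1*m1 + m2*m2) with h | h
  · have hn0 : n0*n0 ≤ 0 := by nlinarith [sq_nonneg (n1*m2 - n2*m1)]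
    nlinarith [sq_nonneg n0, sq_nonneg n1, sq_nonneg n2]
  · nlinarith [sq_nonneg n0, sq_nonneg (n1*m2 - n2*m1)]

lemma mink_defin {m n : ℝ × ℝ × ℝ} (hm : mink m m = -1) (hn : mink n m = 0)
    (hnn : mink n n ≤ 0) : n = 0 := by
  have hsd := mink_semidef hm hn
  obtain ⟨m0, m1, m2⟩ := m
  obtain ⟨n0, n1, n2⟩ := n
  simp only [mink] at *
  have key := lagrange_key hm hn
  have hz : -(n0*n0) + n1*n1 + n2*n2 = 0 := le_antisymm hnn hsd
  have hn0' : n0*n0 ≤ 0 := by nlinarith [sq_nonneg (n1*m2 - n2*m1)]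
  have hn1 : n1 = 0 := by nlinarith [sq_nonneg n0, sq_nonneg n1, sq_nonneg n2]
  have hn2 : n2 = 0 := by nlinarith [sq_nonneg n0, sq_nonneg n1, sq_nonneg n2]
  have hm0 : m0 ≠ 0 := by intro h; rw [h] at hm; nlinarith [sq_nonneg m1, sq_nonneg m2]
  have hn0 : n0 = 0 := by
    rw [hn1, hn2] at hn
    simp at hn
    rcases hn with h | h
    · exact h
    · exact absurd h hm0
  simp [hn0, hn1, hn2, Prod.ext_iff]

lemma exists_phi (T : ℝ × ℝ × ℝ) (h : mink T T = -1) (hpos : 0 < T.1 - T.2.1) :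
    ∃ m : ℍ, Phi m = T := by
  refine ⟨UpperHalfPlane.mk ⟨T.2.2/(T.1 - T.2.1), 1/(T.1 - T.2.1)⟩ (by positivity), ?_⟩
  obtain ⟨t0, t1, t2⟩ := T
  simp only [mink] at h
  simp only [Phi, UpperHalfPlane.mk] at *
  simp only [UpperHalfPlane.re, UpperHalfPlane.im] at *
  dsimp at *
  have hd : t0 - t1 ≠ 0 := ne_of_gt hpos
  refine Prod.ext ?_ (Prod.ext ?_ ?_)
  · dsimp; field_simp; nlinarith
  · dsimp; field_simp; nlinarith
  · dsimp; field_simp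



lemma mink_comm (a b : ℝ × ℝ × ℝ) : mink a b = mink b a := by
  simp only [mink]; ring
lemma mink_add_left (a b c : ℝ × ℝ × ℝ) : mink (a + b) c = mink a c + mink b c := by
  simp only [mink, Prod.fst_add, Prod.snd_add]; ring
lemma mink_sub_left (a b c : ℝ × ℝ × ℝ) : mink (a - b) c = mink a c - mink b c := by
  simp only [mink, Prod.fst_sub, Prod.snd_sub]; ring
lemma mink_smul_left (r : ℝ) (a c : ℝ × ℝ × ℝ) : mink (r • a) c = r * mink a c := by
  simp only [mink, Prod.smul_fst, Prod.smul_snd, smul_eq_mul]; ring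

lemma mink_add_right (a b c : ℝ × ℝ × ℝ) : mink c (a + b) = mink c a + mink c b := by
  rw [mink_comm, mink_add_left, mink_comm a c, mink_comm b c]
lemma mink_sub_right (a b c : ℝ × ℝ × ℝ) : mink c (a - b) = mink c a - mink c b := by
  rw [mink_comm, mink_sub_left, mink_comm a c, mink_comm b c]
lemma mink_smul_right (r : ℝ) (a c : ℝ × ℝ × ℝ) : mink c (r • a) = r * mink c a := by
  rw [mink_comm, mink_smul_left, mink_comm a c]

lemma mink_phi_eq (a b : ℍ) : mink (Phi a) (Phi b) = -Real.cosh (dist a b) := by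
  have := cosh_dist_mink a b; linarith

lemma dist_eq_of_cosh {a b : ℍ} {r : ℝ} (hr : 0 ≤ r) (h : Real.cosh (dist a b) = Real.cosh r) :
    dist a b = r := by
  have h1 := (Real.cosh_le_cosh (x := dist a b) (y := r)).mp (le_of_eq h)
  have h2 := (Real.cosh_le_cosh (x := r) (y := dist a b)).mp (ge_of_eq h)
  rw [abs_of_nonneg dist_nonneg, abs_of_nonneg hr] at h1 h2
  linarith

lemma mink_CS {M X V : ℝ × ℝ × ℝ} (hM : mink M M = -1) (hX : mink X X = -1)
    (hVM : mink V M = 0) (hV : 0 < mink V V) :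
    (mink X V)^2 ≤ mink V V * ((mink X M)^2 - 1) := by
  set a := mink X M with ha
  set W := X + a • M with hW
  have hWM : mink W M = 0 := by
    rw [hW, mink_add_left, mink_smul_left, hM]; ring
  have hWW : mink W W = a^2 - 1 := by
    rw [hW, mink_add_left, mink_add_right, mink_add_right, mink_smul_left, mink_smul_left,
      mink_smul_right, mink_smul_right, hM, hX, mink_comm M X, ← ha]
    ring
  have hWV : mink W V = mink X V := by
    rw [hW, mink_add_left, mink_smul_left, mink_comm M V, hVM]; ring
  set W' := (mink V V) • W - (mink W V) • V with hW'
  have hW'M : mink W' M = 0 := by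
    rw [hW', mink_sub_left, mink_smul_left, mink_smul_left, hWM, hVM]; ring
  have h0 := mink_semidef hM hW'M
  have hexp : mink W' W' = mink V V * (mink V V * mink W W - (mink W V)^2) := by
    rw [hW']
    simp only [mink_sub_left, mink_sub_right, mink_smul_left, mink_smul_right]
    rw [mink_comm V W]
    ring
  rw [hexp] at h0
  rw [← hWV, ← hWW]
  nlinarith [h0, hV]

section PerFactor
variable (g : ℍ ≃ᵢ ℍ) (z : ℍ)

lemma dist_g (a b : ℍ) : dist (g a) (g b) = dist a b := g.dist_eq a b

set_option maxHeartbeats 1000000 in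
lemma cosh_two_step (hmin : ∀ w : ℍ, dist z (g z) ≤ dist w (g w)) :
    Real.cosh (dist z (g (g z))) = 2 * Real.cosh (dist z (g z)) ^ 2 - 1 := by
  set l := dist z (g z) with hl
  set c := Real.cosh (l/2) with hc
  have hc0 : 0 < c := Real.cosh_pos _
  have hsq : 2*c^2 = Real.cosh l + 1 := by
    have h1 : Real.cosh (2*(l/2)) = Real.cosh (l/2)^2 + Real.sinh (l/2)^2 := Real.cosh_two_mul _
    have h2 : Real.cosh (l/2)^2 = Real.sinh (l/2)^2 + 1 := Real.cosh_sq _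
    have h3 : (2:ℝ)*(l/2) = l := by ring
    rw [h3] at h1
    rw [hc]; linarith
  set T := (2*c)⁻¹ • (Phi z + Phi (g z)) with hT
  have hZG : mink (Phi z) (Phi (g z)) = -Real.cosh l := by rw [mink_phi_eq]
  have hTT : mink T T = -1 := by
    rw [hT, mink_smul_left, mink_smul_right, mink_add_left, mink_add_right, mink_add_right,
      mink_self_phi, mink_self_phi, hZG, mink_comm (Phi (g z)) (Phi z), hZG]
    field_simp
    nlinarith [hsq]
  have hT1 : 0 < T.1 - T.2.1 := by
    have h1 : T.1 = (2*c)⁻¹ * ((Phi z).1 + (Phi (g z)).1) := by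
      rw [hT]; simp [Prod.fst_add, smul_eq_mul]; ring
    have h2 : T.2.1 = (2*c)⁻¹ * ((Phi z).2.1 + (Phi (g z)).2.1) := by
      rw [hT]; simp [Prod.snd_add, Prod.fst_add, smul_eq_mul]; ring
    have h3 := phi_fst_sub z
    have h4 := phi_fst_sub (g z)
    have hz1 : 0 < z.im := z.im_pos
    have hz2 : 0 < (g z).im := (g z).im_pos
    rw [h1, h2]
    have : (2*c)⁻¹ * ((Phi z).1 + (Phi (g z)).1) - (2*c)⁻¹ * ((Phi z).2.1 + (Phi (g z)).2.1)
        = (2*c)⁻¹ * (1/z.im + 1/(g z).im) := by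
      rw [← h3, ← h4]; ring
    rw [this]
    positivity
  obtain ⟨m, hm⟩ := exists_phi T hTT hT1
  have hmz : dist z m = l/2 := by
    refine dist_eq_of_cosh (by positivity) ?_
    rw [cosh_dist_mink, hm, hT, mink_smul_right, mink_add_right, mink_self_phi, hZG, ← hc]
    field_simp
    nlinarith [hsq]
  have hZG' : mink (Phi (g z)) (Phi z) = -Real.cosh l := by rw [mink_comm]; exact hZG
  have hmgz : dist m (g z) = l/2 := by
    refine dist_eq_of_cosh (by positivity) ?_
    rw [cosh_dist_mink, hm, hT]
    simp only [mink_smul_left, mink_smul_right, mink_add_left, mink_add_right]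
    rw [hZG, mink_self_phi, ← hc]
    field_simp
    nlinarith [hsq]
  have hdisp : dist m (g m) = l := by
    refine le_antisymm ?_ (hmin m)
    calc dist m (g m) ≤ dist m (g z) + dist (g z) (g m) := dist_triangle _ _ _
      _ = l/2 + dist z m := by rw [hmgz, dist_g]
      _ = l := by rw [hmz]; ring
  have hmgm : mink (Phi m) (Phi (g m)) = -Real.cosh l := by rw [mink_phi_eq, hdisp]
  have hmgz' : mink (Phi m) (Phi (g z)) = -c := by rw [mink_phi_eq, hmgz, hc]
  have hgmgz : mink (Phi (g m)) (Phi (g z)) = -c := by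
    rw [mink_phi_eq]
    have : dist (g m) (g z) = l/2 := by rw [dist_g, dist_comm, hmz]
    rw [this, hc]
  set N := Phi m + Phi (g m) - (2*c) • Phi (g z) with hN
  have hNgz : mink N (Phi (g z)) = 0 := by
    rw [hN, mink_sub_left, mink_add_left, mink_smul_left, hmgz', hgmgz, mink_self_phi]; ring
  have hmgm' : mink (Phi (g m)) (Phi m) = -Real.cosh l := by rw [mink_comm]; exact hmgm
  have hmgz'' : mink (Phi (g z)) (Phi m) = -c := by rw [mink_comm]; exact hmgz'
  have hgmgz' : mink (Phi (g z)) (Phi (g m)) = -c := by rw [mink_comm]; exact hgmgz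
  have hNN : mink N N ≤ 0 := by
    have : mink N N = 0 := by
      rw [hN]
      simp only [mink_sub_left, mink_sub_right, mink_add_left, mink_add_right,
        mink_smul_left, mink_smul_right]
      rw [mink_self_phi, mink_self_phi, mink_self_phi, hmgm, hmgz', hgmgz, hmgm', hmgz'', hgmgz']
      nlinarith [hsq]
    linarith
  have hN0 : N = 0 := mink_defin (mink_self_phi (g z)) hNgz hNN
  have hgmeq : Phi (g m) = (2*c) • Phi (g z) - Phi m := by
    have : Phi m + Phi (g m) = (2*c) • Phi (g z) := by
      rwa [hN, sub_eq_zero] at hN0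
    rw [← this]; abel
  have hgzg2z : mink (Phi (g z)) (Phi (g (g z))) = -Real.cosh l := by
    rw [mink_phi_eq, dist_g]
  have hmg2z : mink (Phi m) (Phi (g (g z))) = c - 2*c*Real.cosh l := by
    have h5 : mink (Phi (g m)) (Phi (g (g z))) = -c := by
      rw [mink_phi_eq]
      have : dist (g m) (g (g z)) = l/2 := by rw [dist_g, hmgz]
      rw [this, hc]
    rw [hgmeq, mink_sub_left, mink_smul_left, hgzg2z] at h5
    linarith
  have h6 : mink (Phi z) (Phi (g (g z))) + mink (Phi (g z)) (Phi (g (g z)))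
      = (2*c) * (c - 2*c*Real.cosh l) := by
    have h7 : mink (Phi m) (Phi (g (g z))) = (2*c)⁻¹ *
        (mink (Phi z) (Phi (g (g z))) + mink (Phi (g z)) (Phi (g (g z)))) := by
      rw [hm, hT, mink_smul_left, mink_add_left]
    rw [h7] at hmg2z
    field_simp at hmg2z
    linarith
  rw [hgzg2z, mink_phi_eq] at h6
  nlinarith [hsq, h6]

end PerFactor


section KeyIneq
variable (g : ℍ ≃ᵢ ℍ) (z : ℍ)

set_option maxHeartbeats 1000000 in
lemma key_ineq (hpos : 0 < dist z (g z)) (hmin : ∀ w : ℍ, dist z (g z) ≤ dist w (g w)) (x : ℍ) :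
    2*(dist x z)^2 + 2*(dist z (g z))^2 ≤ (dist x (g z))^2 + (dist x (g.symm z))^2 := by
  set l := dist z (g z) with hl
  set L := Real.cosh l with hL
  have hL1 : 1 < L := by rw [hL]; exact Real.one_lt_cosh.mpr hpos.ne'
  -- two-step displacement
  have h2step : Real.cosh (dist (g.symm z) (g z)) = 2*L^2 - 1 := by
    have he : dist (g.symm z) (g z) = dist z (g (g z)) := by
      rw [← dist_g g (g.symm z) (g z), g.apply_symm_apply]
    rw [he, cosh_two_step g z hmin, ← hl, ← hL]
  have hPQ' : mink (Phi (g.symm z)) (Phi (g z)) = -(2*L^2 - 1) := by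
    rw [mink_phi_eq, h2step]
  have hPM : mink (Phi (g.symm z)) (Phi z) = -L := by
    rw [mink_phi_eq]
    have : dist (g.symm z) z = l := by
      rw [← dist_g g (g.symm z) z, g.apply_symm_apply, hl]
    rw [this, hL]
  have hQM : mink (Phi (g z)) (Phi z) = -L := by
    rw [mink_phi_eq, dist_comm, ← hl, hL]
  have hPM' : mink (Phi z) (Phi (g.symm z)) = -L := by rw [mink_comm]; exact hPM
  have hQM' : mink (Phi z) (Phi (g z)) = -L := by rw [mink_comm]; exact hQM
  have hPQ'' : mink (Phi (g z)) (Phi (g.symm z)) = -(2*L^2 - 1) := by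
    rw [mink_comm]; exact hPQ'
  -- N = P + Q - 2L M = 0
  set N := Phi (g.symm z) + Phi (g z) - (2*L) • Phi z with hN
  have hNz : mink N (Phi z) = 0 := by
    rw [hN]
    simp only [mink_sub_left, mink_add_left, mink_smul_left]
    rw [hPM, hQM, mink_self_phi]; ring
  have hNN : mink N N ≤ 0 := by
    have : mink N N = 0 := by
      rw [hN]
      simp only [mink_sub_left, mink_sub_right, mink_add_left, mink_add_right,
        mink_smul_left, mink_smul_right]
      rw [mink_self_phi, mink_self_phi, mink_self_phi, hPQ', hPQ'', hPM, hQM, hPM', hQM']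
      ring
    linarith
  have hN0 : N = 0 := mink_defin (mink_self_phi z) hNz hNN
  have hPQsum : Phi (g.symm z) + Phi (g z) = (2*L) • Phi z := by
    rwa [hN, sub_eq_zero] at hN0
  -- median identity
  set A := dist x (g z) with hA
  set B := dist x (g.symm z) with hB
  set C := dist x z with hC
  have hi : Real.cosh A + Real.cosh B = 2 * (L * Real.cosh C) := by
    have h1 : mink (Phi x) (Phi (g.symm z) + Phi (g z)) = -(Real.cosh B) - Real.cosh A := by
      rw [mink_add_right, mink_phi_eq, mink_phi_eq, ← hA, ← hB]; ring
    rw [hPQsum, mink_smul_right, mink_phi_eq, ← hC] at h1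
    linarith
  -- law of cosines bound
  set V := Phi (g.symm z) - Phi (g z) with hV
  have hVz : mink V (Phi z) = 0 := by
    rw [hV, mink_sub_left, hPM, hQM]; ring
  have hVV : mink V V = 4*L^2 - 4 := by
    rw [hV]
    simp only [mink_sub_left, mink_sub_right]
    rw [mink_self_phi, mink_self_phi, hPQ', hPQ'']; ring
  have hVVpos : 0 < mink V V := by rw [hVV]; nlinarith
  have hCS := mink_CS (mink_self_phi z) (mink_self_phi x) hVz hVVpos
  have hXV : mink (Phi x) V = Real.cosh A - Real.cosh B := by
    rw [hV, mink_sub_right, mink_phi_eq, mink_phi_eq, ← hA, ← hB]; ring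
  have hXM : mink (Phi x) (Phi z) = -(Real.cosh C) := by rw [mink_phi_eq, hC]
  rw [hXV, hXM, hVV] at hCS
  have hsl : 0 ≤ Real.sinh l := by
    rw [Real.sinh_nonneg_iff]; exact hpos.le
  have hsC : 0 ≤ Real.sinh C := by
    rw [Real.sinh_nonneg_iff]; exact dist_nonneg
  have hsl2 : Real.sinh l ^ 2 = L^2 - 1 := by rw [hL]; have := Real.cosh_sq l; linarith
  have hsC2 : Real.sinh C ^ 2 = Real.cosh C ^ 2 - 1 := by have := Real.cosh_sq C; linarith
  have hii : |Real.cosh A - Real.cosh B| ≤ 2 * (Real.sinh l * Real.sinh C) := by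
    rw [abs_le]
    constructor <;> nlinarith [mul_nonneg hsl hsC, sq_nonneg (Real.cosh A - Real.cosh B
      - 2*(Real.sinh l * Real.sinh C)), sq_nonneg (Real.cosh A - Real.cosh B
      + 2*(Real.sinh l * Real.sinh C))]
  have := starIneq (dist_nonneg (x := x) (y := g z)) (dist_nonneg (x := x) (y := g.symm z))
    (dist_nonneg (x := x) (y := z)) hpos hi hii
  linarith

end KeyIneq

/-- If `γ = (g₁,g₂)` with both `gᵢ` hyperbolic, and `𝐳 = (z₁,z₂)` lies on the
`γ`-invariant flat (each `zᵢ` lies on the invariant axis of `gᵢ`, i.e. realizes the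
positive minimal displacement), then `E(𝐳,γ(𝐳))` and `E(𝐳,γ⁻¹(𝐳))` are disjoint. -/
theorem equidistant_hypersurfaces_disjoint
    (g₁ g₂ : UpperHalfPlane ≃ᵢ UpperHalfPlane) (z₁ z₂ : UpperHalfPlane)
    (h₁pos : 0 < dist z₁ (g₁ z₁))
    (h₁min : dist z₁ (g₁ z₁) = ⨅ w : UpperHalfPlane, dist w (g₁ w))
    (h₂pos : 0 < dist z₂ (g₂ z₂))
    (h₂min : dist z₂ (g₂ z₂) = ⨅ w : UpperHalfPlane, dist w (g₂ w)) :
    ¬ ∃ x : Bidisk,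
        dist x (toBD (z₁, z₂)) = dist x (toBD (g₁ z₁, g₂ z₂)) ∧
        dist x (toBD (z₁, z₂)) = dist x (toBD (g₁.symm z₁, g₂.symm z₂)) := by
  rintro ⟨x, hx1, hx2⟩
  have hbdd : ∀ g : ℍ ≃ᵢ ℍ, BddBelow (Set.range fun w : ℍ => dist w (g w)) := by
    intro g
    exact ⟨0, by rintro _ ⟨w, rfl⟩; exact dist_nonneg⟩
  have hmin₁ : ∀ w : ℍ, dist z₁ (g₁ z₁) ≤ dist w (g₁ w) := by
    intro w; rw [h₁min]; exact ciInf_le (hbdd g₁) w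
  have hmin₂ : ∀ w : ℍ, dist z₂ (g₂ z₂) ≤ dist w (g₂ w) := by
    intro w; rw [h₂min]; exact ciInf_le (hbdd g₂) w
  have key : ∀ p : ℍ × ℍ, dist x (toBD p) ^ 2 = dist x.fst p.1 ^ 2 + dist x.snd p.2 ^ 2 := by
    intro p
    have h0 := WithLp.prod_dist_eq_add (p := 2) (by norm_num) x (toBD p)
    have hfst : (toBD p).fst = p.1 := rfl
    have hsnd : (toBD p).snd = p.2 := rfl
    have h2r : ENNReal.toReal (2 : ENNReal) = (2:ℝ) := by norm_num
    rw [hfst, hsnd, h2r] at h0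
    rw [h0]
    have hnn : (0:ℝ) ≤ dist x.fst p.1 ^ (2:ℝ) + dist x.snd p.2 ^ (2:ℝ) := by positivity
    rw [← Real.rpow_natCast ((dist x.fst p.1 ^ (2:ℝ) + dist x.snd p.2 ^ (2:ℝ)) ^ (1/(2:ℝ))) 2,
      ← Real.rpow_mul hnn]
    norm_num
  have e1 : dist x.fst z₁ ^ 2 + dist x.snd z₂ ^ 2
      = dist x.fst (g₁ z₁) ^ 2 + dist x.snd (g₂ z₂) ^ 2 := by
    have h := congrArg (· ^ 2) hx1
    simpa only [key] using h
  have e2 : dist x.fst z₁ ^ 2 + dist x.snd z₂ ^ 2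
      = dist x.fst (g₁.symm z₁) ^ 2 + dist x.snd (g₂.symm z₂) ^ 2 := by
    have h := congrArg (· ^ 2) hx2
    simpa only [key] using h
  have k1 := key_ineq g₁ z₁ h₁pos hmin₁ x.fst
  have k2 := key_ineq g₂ z₂ h₂pos hmin₂ x.snd
  have p1 : 0 < dist z₁ (g₁ z₁) ^ 2 := pow_pos h₁pos 2
  have p2 : 0 < dist z₂ (g₂ z₂) ^ 2 := pow_pos h₂pos 2
  linarith

end
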